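/- The three sets {⌊nφ⌋ + 2n + 1 : n ≥ 0}, {⌊nφ⌋ + 2n + 2 : n ≥ 0}, and {2⌊nφ⌋ − n + 2 : n ≥ 1} are pairwise disjoint and their union is the set of all positive integers; i.e., the sequences (⌊nφ⌋ + 2n + 1)_{n≥0}, (⌊nφ⌋ + 2n + 2)_{n≥0}, and (2⌊nφ⌋ − n + 2)_{n≥1} form a complementary triple of generalized Beatty sequences. -/

import Mathlib

noncomputable def phi : ℝ := (1 + Real.sqrt 5) / 2
noncomputable def gam : ℝ := (5 - Real.sqrt 5) / 10
lemma s_sq : Real.sqrt 5 ^ 2 = 5 := Real.sq_sqrt (by norm_num)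
lemma s_lb : (2:ℝ) < Real.sqrt 5 := by nlinarith [s_sq, Real.sqrt_nonneg 5]
lemma s_ub : Real.sqrt 5 < 3 := by nlinarith [s_sq, Real.sqrt_nonneg 5]
lemma irr_s : Irrational (Real.sqrt 5) := (by norm_num : Nat.Prime 5).irrational_sqrt
lemma irr_gam_mul (z : ℤ) (hz : z ≠ 0) : Irrational ((z : ℝ) * gam) := by
  have h1 : Irrational ((z : ℝ) * Real.sqrt 5) := irr_s.intCast_mul hz
  have h2 : Irrational (((5 * z : ℤ) : ℝ) - (z : ℝ) * Real.sqrt 5) := h1.intCast_sub _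
  have h3 : Irrational ((((5 * z : ℤ) : ℝ) - (z : ℝ) * Real.sqrt 5) / ((10 : ℤ) : ℝ)) :=
    h2.div_intCast (by norm_num)
  have : ((z : ℝ) * gam) = (((5 * z : ℤ) : ℝ) - (z : ℝ) * Real.sqrt 5) / ((10 : ℤ) : ℝ) := by
    unfold gam; push_cast; ring
  rw [this]; exact h3
lemma irr_phi_mul (n : ℕ) (hn : n ≠ 0) : Irrational ((n : ℝ) * phi) := by
  have h1 : Irrational (((n : ℤ) : ℝ) * Real.sqrt 5) :=
    irr_s.intCast_mul (by exact_mod_cast hn)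
  have h2 : Irrational (((n : ℤ) : ℝ) + ((n : ℤ) : ℝ) * Real.sqrt 5) := h1.intCast_add (n : ℤ)
  have h3 : Irrational ((((n : ℤ) : ℝ) + ((n : ℤ) : ℝ) * Real.sqrt 5) / ((2 : ℤ) : ℝ)) :=
    h2.div_intCast (by norm_num)
  have : ((n : ℝ) * phi) = (((n : ℤ) : ℝ) + ((n : ℤ) : ℝ) * Real.sqrt 5) / ((2 : ℤ) : ℝ) := by
    unfold phi; push_cast; ring
  rw [this]; exact h3

lemma classA (z : ℤ) (hz : 0 < z) :
    (∃ n : ℕ, z = ⌊(n : ℝ) * phi⌋ + 2 * n + 1) ↔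
      (z : ℝ) * gam - ⌊(z : ℝ) * gam⌋ ≤ gam := by
  have hs := s_sq; have hlb := s_lb; have hub := s_ub
  constructor
  · rintro ⟨n, rfl⟩
    have hF1 : (⌊(n : ℝ) * phi⌋ : ℝ) ≤ (n:ℝ) * phi := Int.floor_le _
    have hF2 : (n:ℝ) * phi < ⌊(n : ℝ) * phi⌋ + 1 := Int.lt_floor_add_one _
    set F : ℤ := ⌊(n : ℝ) * phi⌋ with hFdef
    have hcast : ((F + 2 * (n:ℤ) + 1 : ℤ) : ℝ) = (F:ℝ) + 2*(n:ℝ) + 1 := by push_cast; ring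
    have hK : ⌊((F + 2 * (n:ℤ) + 1 : ℤ) : ℝ) * gam⌋ = (n:ℤ) := by
      rw [Int.floor_eq_iff, hcast]
      unfold gam phi at *
      constructor
      · push_cast; nlinarith
      · push_cast; nlinarith
    rw [hK, hcast]
    unfold gam phi at *
    push_cast
    nlinarith
  · intro h
    set K : ℤ := ⌊(z : ℝ) * gam⌋ with hKdef
    have hKle : (K : ℝ) ≤ (z:ℝ) * gam := Int.floor_le _
    have hKlt : (z:ℝ) * gam < K + 1 := Int.lt_floor_add_one _
    have hKpos : (K:ℝ) < (z:ℝ) * gam := by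
      rcases lt_or_eq_of_le hKle with h' | h'
      · exact h'
      · exact absurd h'.symm ((irr_gam_mul z (by omega)).ne_int K)
    have hz' : (0:ℝ) < (z:ℝ) := by exact_mod_cast hz
    have hK0 : 0 ≤ K := by
      rw [hKdef]
      apply Int.floor_nonneg.2
      have hg : (0:ℝ) < gam := by unfold gam; nlinarith
      positivity
    refine ⟨K.toNat, ?_⟩
    have hn : ((K.toNat : ℤ) : ℤ) = K := by omega
    have hcast : ((K.toNat : ℕ) : ℝ) = (K : ℝ) := by
      have := Int.toNat_of_nonneg hK0
      exact_mod_cast this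
    have hfl : ⌊((K.toNat : ℕ) : ℝ) * phi⌋ = z - 2*K - 1 := by
      rw [Int.floor_eq_iff, hcast]
      unfold gam phi at *
      push_cast
      constructor
      · nlinarith
      · nlinarith
    rw [hfl]
    omega


lemma classB (z : ℤ) (hz : 0 < z) :
    (∃ n : ℕ, z = ⌊(n : ℝ) * phi⌋ + 2 * n + 2) ↔
      (gam < (z : ℝ) * gam - ⌊(z : ℝ) * gam⌋ ∧ (z : ℝ) * gam - ⌊(z : ℝ) * gam⌋ ≤ 2 * gam) := by
  have hs := s_sq; have hlb := s_lb; have hub := s_ub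
  constructor
  · rintro ⟨n, rfl⟩
    have hF1 : (⌊(n : ℝ) * phi⌋ : ℝ) ≤ (n:ℝ) * phi := Int.floor_le _
    have hF2 : (n:ℝ) * phi < ⌊(n : ℝ) * phi⌋ + 1 := Int.lt_floor_add_one _
    set F : ℤ := ⌊(n : ℝ) * phi⌋ with hFdef
    have hcast : ((F + 2 * (n:ℤ) + 2 : ℤ) : ℝ) = (F:ℝ) + 2*(n:ℝ) + 2 := by push_cast; ring
    have hK : ⌊((F + 2 * (n:ℤ) + 2 : ℤ) : ℝ) * gam⌋ = (n:ℤ) := by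
      rw [Int.floor_eq_iff, hcast]
      unfold gam phi at *
      constructor
      · push_cast; nlinarith
      · push_cast; nlinarith
    rw [hK, hcast]
    unfold gam phi at *
    push_cast
    constructor
    · nlinarith
    · nlinarith
  · rintro ⟨h1, h2⟩
    set K : ℤ := ⌊(z : ℝ) * gam⌋ with hKdef
    have hKle : (K : ℝ) ≤ (z:ℝ) * gam := Int.floor_le _
    have hKlt : (z:ℝ) * gam < K + 1 := Int.lt_floor_add_one _
    have hz' : (0:ℝ) < (z:ℝ) := by exact_mod_cast hz
    have hK0 : 0 ≤ K := by
      rw [hKdef]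
      apply Int.floor_nonneg.2
      have hg : (0:ℝ) < gam := by unfold gam; nlinarith
      positivity
    refine ⟨K.toNat, ?_⟩
    have hcast : ((K.toNat : ℕ) : ℝ) = (K : ℝ) := by
      have := Int.toNat_of_nonneg hK0
      exact_mod_cast this
    have hfl : ⌊((K.toNat : ℕ) : ℝ) * phi⌋ = z - 2*K - 2 := by
      rw [Int.floor_eq_iff, hcast]
      unfold gam phi at *
      push_cast
      constructor
      · nlinarith
      · nlinarith
    rw [hfl]
    omega

lemma classC (z : ℤ) (hz : 0 < z) :
    (∃ n : ℕ, 1 ≤ n ∧ z = 2 * ⌊(n : ℝ) * phi⌋ - n + 2) ↔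
      2 * gam < (z : ℝ) * gam - ⌊(z : ℝ) * gam⌋ := by
  have hs := s_sq; have hlb := s_lb; have hub := s_ub
  constructor
  · rintro ⟨n, hn1, rfl⟩
    have hF1 : (⌊(n : ℝ) * phi⌋ : ℝ) ≤ (n:ℝ) * phi := Int.floor_le _
    have hF2 : (n:ℝ) * phi < ⌊(n : ℝ) * phi⌋ + 1 := Int.lt_floor_add_one _
    have hF1' : (⌊(n : ℝ) * phi⌋ : ℝ) < (n:ℝ) * phi := by
      rcases lt_or_eq_of_le hF1 with h' | h'
      · exact h'
      · exact absurd h' (Ne.symm ((irr_phi_mul n (by omega)).ne_int _))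
    set F : ℤ := ⌊(n : ℝ) * phi⌋ with hFdef
    have hcast : ((2 * F - (n:ℤ) + 2 : ℤ) : ℝ) = 2*(F:ℝ) - (n:ℝ) + 2 := by push_cast; ring
    have hK : ⌊((2 * F - (n:ℤ) + 2 : ℤ) : ℝ) * gam⌋ = F - (n:ℤ) := by
      rw [Int.floor_eq_iff, hcast]
      unfold gam phi at *
      constructor
      · push_cast; nlinarith
      · push_cast; nlinarith
    rw [hK, hcast]
    unfold gam phi at *
    push_cast
    nlinarith
  · intro h
    set K : ℤ := ⌊(z : ℝ) * gam⌋ with hKdef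
    have hKle : (K : ℝ) ≤ (z:ℝ) * gam := Int.floor_le _
    have hKlt : (z:ℝ) * gam < K + 1 := Int.lt_floor_add_one _
    have hz' : (0:ℝ) < (z:ℝ) := by exact_mod_cast hz
    have hK0 : 0 ≤ K := by
      rw [hKdef]
      apply Int.floor_nonneg.2
      have hg : (0:ℝ) < gam := by unfold gam; nlinarith
      positivity
    -- n = z - 2K - 2 ≥ 1
    have hn1 : 1 ≤ z - 2*K - 2 := by
      have : (2*K + 2 : ℝ) < (z:ℝ) := by
        have hK0' : (0:ℝ) ≤ (K:ℝ) := by exact_mod_cast hK0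
        unfold gam at *
        nlinarith
      have : (2*K + 2 : ℤ) < z := by exact_mod_cast this
      omega
    refine ⟨(z - 2*K - 2).toNat, by omega, ?_⟩
    have hcast : (((z - 2*K - 2).toNat : ℕ) : ℝ) = ((z:ℝ) - 2*K - 2) := by
      have h2 := Int.toNat_of_nonneg (by omega : (0:ℤ) ≤ z - 2*K - 2)
      have : (((z - 2*K - 2).toNat : ℤ) : ℝ) = ((z - 2*K - 2 : ℤ) : ℝ) := by rw [h2]
      push_cast at this
      exact this
    have hfl : ⌊(((z - 2*K - 2).toNat : ℕ) : ℝ) * phi⌋ = (z - 2*K - 2) + K := by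
      rw [Int.floor_eq_iff, hcast]
      unfold gam phi at *
      push_cast
      constructor
      · nlinarith
      · nlinarith
    rw [hfl]
    omega

lemma posA {z : ℤ} (h : ∃ n : ℕ, z = ⌊(n : ℝ) * phi⌋ + 2 * n + 1) : 0 < z := by
  obtain ⟨n, rfl⟩ := h
  have hphi : (0:ℝ) ≤ phi := by unfold phi; positivity
  have : (0:ℤ) ≤ ⌊(n : ℝ) * phi⌋ := Int.floor_nonneg.2 (by positivity)
  omega

lemma posB {z : ℤ} (h : ∃ n : ℕ, z = ⌊(n : ℝ) * phi⌋ + 2 * n + 2) : 0 < z := by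
  obtain ⟨n, rfl⟩ := h
  have hphi : (0:ℝ) ≤ phi := by unfold phi; positivity
  have : (0:ℤ) ≤ ⌊(n : ℝ) * phi⌋ := Int.floor_nonneg.2 (by positivity)
  omega

lemma posC {z : ℤ} (h : ∃ n : ℕ, 1 ≤ n ∧ z = 2 * ⌊(n : ℝ) * phi⌋ - n + 2) : 0 < z := by
  obtain ⟨n, hn, rfl⟩ := h
  have hphi : (1:ℝ) ≤ phi := by
    unfold phi; nlinarith [s_lb]
  have : ((n:ℤ) : ℝ) ≤ (n : ℝ) * phi := by
    push_cast
    nlinarith [Nat.cast_nonneg (α := ℝ) n]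
  have h2 : (n:ℤ) ≤ ⌊(n : ℝ) * phi⌋ := Int.le_floor.2 this
  omega

lemma gam_pos : (0:ℝ) < gam := by unfold gam; nlinarith [s_ub]

/-- The three sequences `(⌊nφ⌋ + 2n + 1)_{n≥0}`, `(⌊nφ⌋ + 2n + 2)_{n≥0}` and
`(2⌊nφ⌋ − n + 2)_{n≥1}` form a complementary triple: their value sets are pairwise
disjoint and their union is the set of positive integers. -/
theorem kimberling_triple :
    Disjoint {z : ℤ | ∃ n : ℕ, z = ⌊(n : ℝ) * phi⌋ + 2 * n + 1}
      {z : ℤ | ∃ n : ℕ, z = ⌊(n : ℝ) * phi⌋ + 2 * n + 2} ∧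
    Disjoint {z : ℤ | ∃ n : ℕ, z = ⌊(n : ℝ) * phi⌋ + 2 * n + 1}
      {z : ℤ | ∃ n : ℕ, 1 ≤ n ∧ z = 2 * ⌊(n : ℝ) * phi⌋ - n + 2} ∧
    Disjoint {z : ℤ | ∃ n : ℕ, z = ⌊(n : ℝ) * phi⌋ + 2 * n + 2}
      {z : ℤ | ∃ n : ℕ, 1 ≤ n ∧ z = 2 * ⌊(n : ℝ) * phi⌋ - n + 2} ∧
    {z : ℤ | ∃ n : ℕ, z = ⌊(n : ℝ) * phi⌋ + 2 * n + 1} ∪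
      {z : ℤ | ∃ n : ℕ, z = ⌊(n : ℝ) * phi⌋ + 2 * n + 2} ∪
      {z : ℤ | ∃ n : ℕ, 1 ≤ n ∧ z = 2 * ⌊(n : ℝ) * phi⌋ - n + 2} = {z : ℤ | 0 < z} := by
  refine ⟨?_, ?_, ?_, ?_⟩
  · rw [Set.disjoint_left]
    intro z hA hB
    have hz := posA hA
    rw [Set.mem_setOf_eq, classA z hz] at hA
    rw [Set.mem_setOf_eq, classB z hz] at hB
    linarith [hA, hB.1]
  · rw [Set.disjoint_left]
    intro z hA hC
    have hz := posA hA
    rw [Set.mem_setOf_eq, classA z hz] at hA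
    rw [Set.mem_setOf_eq, classC z hz] at hC
    linarith [hA, hC, gam_pos]
  · rw [Set.disjoint_left]
    intro z hB hC
    have hz := posB hB
    rw [Set.mem_setOf_eq, classB z hz] at hB
    rw [Set.mem_setOf_eq, classC z hz] at hC
    linarith [hB.2, hC]
  · ext z
    simp only [Set.mem_union, Set.mem_setOf_eq]
    constructor
    · rintro ((h | h) | h)
      · exact posA h
      · exact posB h
      · exact posC h
    · intro hz
      by_cases h1 : (z : ℝ) * gam - ⌊(z : ℝ) * gam⌋ ≤ gam
      · exact Or.inl (Or.inl ((classA z hz).2 h1))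
      · by_cases h2 : (z : ℝ) * gam - ⌊(z : ℝ) * gam⌋ ≤ 2 * gam
        · exact Or.inl (Or.inr ((classB z hz).2 ⟨lt_of_not_ge h1, h2⟩))
        · exact Or.inr ((classC z hz).2 (lt_of_not_ge h2))
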